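/- Let H be a complex separable Hilbert space, K a bounded linear operator on H with closed range R(K), and K† its Moore–Penrose pseudo-inverse. Let (f_k)_{k∈I} be a K-frame for H with synthesis operator T_F, let (g_k)_{k∈I} be a K-dual of (f_k), and set h_k := (K†)* g_k for each k. Then the reconstruction property 'for every x ∈ R(K) the family (⟨h_k, x⟩ f_k)_{k∈I} is unconditionally summable with sum x' holds if and only if there exists a bounded linear operator M : ℓ²(I) → H with range contained in R(K) such that M(T_F* x) = x for every x ∈ R(K) and h_k = M e_k for every k ∈ I, where (e_k) is the standard orthonormal basis of ℓ²(I). -/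

import Mathlib

open ContinuousLinearMap

lemma exists_analysis_operator {H : Type*} [NormedAddCommGroup H] [InnerProductSpace ℂ H]
    {I : Type*} (g : I → H) (D : ℝ) (hD : 0 ≤ D)
    (hsum : ∀ x : H, Summable (fun k => ‖(inner ℂ (g k) x : ℂ)‖ ^ 2))
    (hbd : ∀ x : H, ∑' k, ‖(inner ℂ (g k) x : ℂ)‖ ^ 2 ≤ D * ‖x‖ ^ 2) :
    ∃ U : H →L[ℂ] lp (fun _ : I => ℂ) 2, ∀ (x : H) (k : I), U x k = inner ℂ (g k) x := by
  have hpow : ∀ c : ℝ, c ^ ((2 : ENNReal).toReal) = c ^ 2 := by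
    intro c
    rw [ENNReal.toReal_ofNat]
    rw [show ((2 : ℝ)) = ((2 : ℕ) : ℝ) by norm_num, Real.rpow_natCast]
  have hmem : ∀ x : H, Memℓp (fun k : I => (inner ℂ (g k) x : ℂ)) 2 := by
    intro x
    apply memℓp_gen
    simpa only [hpow] using hsum x
  let Ul : H →ₗ[ℂ] lp (fun _ : I => ℂ) 2 :=
    { toFun := fun x => ⟨fun k => inner ℂ (g k) x, hmem x⟩
      map_add' := fun x y => by
        apply lp.ext
        funext k
        simp [inner_add_right]
        rfl
      map_smul' := fun c x => by
        apply lp.ext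
        funext k
        simp [inner_smul_right] }
  have hbound : ∀ x, ‖Ul x‖ ≤ Real.sqrt D * ‖x‖ := by
    intro x
    have h1 : ‖Ul x‖ ^ ((2 : ENNReal).toReal)
        = ∑' k, ‖(inner ℂ (g k) x : ℂ)‖ ^ ((2 : ENNReal).toReal) :=
      lp.norm_rpow_eq_tsum (by norm_num) (Ul x)
    have h2 : ‖Ul x‖ ^ 2 ≤ (Real.sqrt D * ‖x‖) ^ 2 := by
      rw [mul_pow, Real.sq_sqrt hD]
      calc ‖Ul x‖ ^ 2 = ∑' k, ‖(inner ℂ (g k) x : ℂ)‖ ^ 2 := by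
            have := h1
            simp only [hpow] at this
            exact this
        _ ≤ D * ‖x‖ ^ 2 := hbd x
    calc ‖Ul x‖ = Real.sqrt (‖Ul x‖ ^ 2) := (Real.sqrt_sq (norm_nonneg _)).symm
      _ ≤ Real.sqrt ((Real.sqrt D * ‖x‖) ^ 2) := Real.sqrt_le_sqrt h2
      _ = Real.sqrt D * ‖x‖ := Real.sqrt_sq (by positivity)
  exact ⟨Ul.mkContinuous (Real.sqrt D) hbound, fun x k => rfl⟩

/-- for `K` with closed range and Moore–Penrose pseudo-inverse `K†`, a
`K`-frame `(f k)` with synthesis operator `T_F`, a `K`-dual `(g k)` of `(f k)`, and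
`h k := (K†)* g k`, the reconstruction `x = ∑ₖ ⟨h k, x⟩ • f k` for all `x ∈ R(K)` holds
iff `h k = M e_k` for some bounded `M : ℓ²(I) → H` with range in `R(K)` that is a left
inverse of `T_F*` on `R(K)`. -/
theorem reconstruction_characterization
    {H : Type*} [NormedAddCommGroup H] [InnerProductSpace ℂ H]
    [CompleteSpace H] [TopologicalSpace.SeparableSpace H]
    {I : Type*} [Countable I] [DecidableEq I]
    (K Kd : H →L[ℂ] H) (f g : I → H)
    (TF : lp (fun _ : I => ℂ) 2 →L[ℂ] H)
    (hTF : ∀ k, TF (lp.single 2 k 1) = f k)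
    (hK : IsClosed (Set.range ⇑K))
    (hKd1 : K.comp (Kd.comp K) = K)
    (hKd2 : Kd.comp (K.comp Kd) = Kd)
    (hKd3 : adjoint (K.comp Kd) = K.comp Kd)
    (hKd4 : adjoint (Kd.comp K) = Kd.comp K)
    (A B : ℝ) (hA : 0 < A) (hB : 0 < B)
    (hf : ∀ x : H, Summable (fun k => ‖(inner ℂ (f k) x : ℂ)‖ ^ 2) ∧
      A * ‖adjoint K x‖ ^ 2 ≤ ∑' k, ‖(inner ℂ (f k) x : ℂ)‖ ^ 2 ∧
      ∑' k, ‖(inner ℂ (f k) x : ℂ)‖ ^ 2 ≤ B * ‖x‖ ^ 2)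
    (hg : ∃ D : ℝ, 0 < D ∧ ∀ x : H, Summable (fun k => ‖(inner ℂ (g k) x : ℂ)‖ ^ 2) ∧
      ∑' k, ‖(inner ℂ (g k) x : ℂ)‖ ^ 2 ≤ D * ‖x‖ ^ 2)
    (hdual : ∀ x : H, HasSum (fun k => (inner ℂ (g k) x : ℂ) • f k) (K x)) :
    (∀ x ∈ Set.range ⇑K,
        HasSum (fun k => (inner ℂ ((adjoint Kd) (g k)) x : ℂ) • f k) x) ↔
      ∃ M : lp (fun _ : I => ℂ) 2 →L[ℂ] H,
        Set.range ⇑M ⊆ Set.range ⇑K ∧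
        (∀ x ∈ Set.range ⇑K, M ((adjoint TF) x) = x) ∧
        ∀ k, (adjoint Kd) (g k) = M (lp.single 2 k 1) := by
  obtain ⟨D, hD, hgD⟩ := hg
  obtain ⟨U, hU⟩ := exists_analysis_operator g D hD.le (fun x => (hgD x).1) (fun x => (hgD x).2)
  have hKKdK : ∀ z, K (Kd (K z)) = K z := fun z => by
    have := ContinuousLinearMap.ext_iff.mp hKd1 z
    simpa using this
  have hKdKKd : ∀ z, Kd (K (Kd z)) = Kd z := fun z => by
    have := ContinuousLinearMap.ext_iff.mp hKd2 z
    simpa using this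
  -- T_F ∘ U = K (synthesis of f applied to analysis of g)
  have hTFU : ∀ z, TF (U z) = K z := by
    intro z
    have h1 : HasSum (fun k : I => lp.single 2 k (U z k)) (U z) :=
      lp.hasSum_single ENNReal.ofNat_ne_top (U z)
    have h2 : HasSum (fun k : I => TF (lp.single 2 k (U z k))) (TF (U z)) :=
      h1.mapL TF
    have h3 : ∀ k : I, TF (lp.single 2 k (U z k)) = (inner ℂ (g k) z : ℂ) • f k := by
      intro k
      rw [hU z k]
      have hs : lp.single (E := fun _ : I => ℂ) 2 k ((inner ℂ (g k) z : ℂ))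
          = (inner ℂ (g k) z : ℂ) • lp.single 2 k 1 := by
        rw [← lp.single_smul]
        norm_num
      rw [hs, map_smul, hTF]
    simp only [h3] at h2
    exact h2.unique (hdual z)
  set W : H →L[ℂ] lp (fun _ : I => ℂ) 2 := U.comp Kd with hW
  set M : lp (fun _ : I => ℂ) 2 →L[ℂ] H := adjoint W with hM
  have key : ∀ (y : H) (a : lp (fun _ : I => ℂ) 2),
      (inner ℂ y (M a) : ℂ) = inner ℂ (U (Kd y)) a := by
    intro y a
    rw [hM, adjoint_inner_right]
    rfl
  have hMsingle : ∀ k, M (lp.single 2 k 1) = adjoint Kd (g k) := by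
    intro k
    refine ext_inner_right ℂ fun x => ?_
    rw [hM, adjoint_inner_left, adjoint_inner_left, lp.inner_single_left]
    have hWx : (W x) k = (inner ℂ (g k) (Kd x) : ℂ) := by
      rw [hW]
      exact hU (Kd x) k
    simp [hWx, RCLike.inner_apply]
  have hrange : ∀ a, M a ∈ Set.range ⇑K := by
    intro a
    refine ⟨Kd (M a), ?_⟩
    refine ext_inner_left ℂ fun v => ?_
    calc (inner ℂ v (K (Kd (M a))) : ℂ)
        = inner ℂ v (adjoint (K.comp Kd) (M a)) := by rw [hKd3]; rfl
      _ = inner ℂ ((K.comp Kd) v) (M a) := adjoint_inner_right _ _ _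
      _ = inner ℂ (U (Kd ((K.comp Kd) v))) a := key _ a
      _ = inner ℂ (U (Kd v)) a := by
          rw [show Kd ((K.comp Kd) v) = Kd v from hKdKKd v]
      _ = inner ℂ v (M a) := (key v a).symm
  have hMTF : ∀ x ∈ Set.range ⇑K, M (adjoint TF x) = x := by
    rintro x ⟨z, rfl⟩
    refine ext_inner_left ℂ fun v => ?_
    calc (inner ℂ v (M (adjoint TF (K z))) : ℂ)
        = inner ℂ (U (Kd v)) (adjoint TF (K z)) := key v _
      _ = inner ℂ (TF (U (Kd v))) (K z) := adjoint_inner_right _ _ _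
      _ = inner ℂ (K (Kd v)) (K z) := by rw [hTFU]
      _ = inner ℂ ((K.comp Kd) v) (K z) := rfl
      _ = inner ℂ v (adjoint (K.comp Kd) (K z)) := (adjoint_inner_right _ _ _).symm
      _ = inner ℂ v (K z) := by
          rw [hKd3]
          exact congrArg (fun t => (inner ℂ v t : ℂ)) (hKKdK z)
  have hrecon : ∀ x ∈ Set.range ⇑K,
      HasSum (fun k => (inner ℂ ((adjoint Kd) (g k)) x : ℂ) • f k) x := by
    rintro x ⟨z, rfl⟩
    have h := hdual (Kd (K z))
    rw [hKKdK z] at h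
    simpa only [adjoint_inner_left] using h
  constructor
  · intro _
    refine ⟨M, ?_, hMTF, fun k => (hMsingle k).symm⟩
    rintro y ⟨a, rfl⟩
    exact hrange a
  · intro _
    exact hrecon
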